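/- Let F be a finite field with q elements. The number H_{n,m} of m×m polynomial matrices over F[z] in Hermite form with deg(det) = n satisfies H_{n,m} = q^{mn} · ∏_{j=1}^{n} (1 - q^{-(m+j-1)})/(1 - q^{-j}). -/

import Mathlib

/-- A square polynomial matrix is in Hermite form if it is lower triangular, has monic
diagonal entries, and each entry below the diagonal has degree strictly less than the
diagonal entry of its row. -/
def HermiteForm {F : Type*} [Field F] {m : ℕ}
    (D : Matrix (Fin m) (Fin m) (Polynomial F)) : Prop :=
  (∀ i j, i < j → D i j = 0) ∧
  (∀ i, (D i i).Monic) ∧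
  (∀ i j, j < i → (D i j).degree < (D i i).degree)

open Finset Polynomial

namespace Stmt10

/-- `T q m n` = number of m×m Hermite forms with det degree n (recursively). -/
def T (q : ℕ) : ℕ → ℕ → ℕ
  | 0, 0 => 1
  | 0, _+1 => 0
  | _+1, 0 => 1
  | m+1, n+1 => T q m (n+1) + q^(m+1) * T q (m+1) n

lemma T_closed (q : ℕ) : ∀ m n : ℕ,
    (T q m n : ℚ) * ∏ k ∈ range n, ((q:ℚ)^(k+1) - 1) =
      (q:ℚ)^n * ∏ k ∈ range n, ((q:ℚ)^(m+k) - 1)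
  | 0, 0 => by simp [T]
  | 0, n+1 => by
      have h0 : ∏ k ∈ range (n+1), ((q:ℚ)^(0+k) - 1) = 0 :=
        Finset.prod_eq_zero (Finset.mem_range.mpr n.succ_pos) (by simp)
      simp only [T, Nat.cast_zero, zero_mul, h0, mul_zero]
  | m+1, 0 => by simp [T]
  | m+1, n+1 => by
      have ih1 := T_closed q m (n+1)
      have ih2 := T_closed q (m+1) n
      have hN : ∏ k ∈ range (n+1), ((q:ℚ)^(m+k) - 1)
          = ((q:ℚ)^m - 1) * ∏ k ∈ range n, ((q:ℚ)^(m+1+k) - 1) := by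
        rw [Finset.prod_range_succ' (fun k => ((q:ℚ)^(m+k) - 1)), mul_comm]
        simp only [Nat.add_zero]
        congr 1
        refine Finset.prod_congr rfl fun k _ => ?_
        rw [show m + (k+1) = m+1+k by omega]
      rw [hN] at ih1
      rw [show T q (m+1) (n+1) = T q m (n+1) + q^(m+1) * T q (m+1) n from by rw [T]]
      push_cast
      rw [Finset.prod_range_succ, Finset.prod_range_succ]
      rw [Finset.prod_range_succ] at ih1
      linear_combination ih1 + ((q:ℚ)^(m+1) * ((q:ℚ)^(n+1) - 1)) * ih2
  termination_by m n => (m, n)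

/-- the generic cons-peeling for weighted sums over `piAntidiag`. -/
lemma sum_piAntidiag_cons (q : ℕ) (w : ℕ → ℕ) {i : ℕ} {s : Finset ℕ} (hi : i ∉ s) (n : ℕ) :
    ∑ f ∈ (Finset.cons i s hi).piAntidiag n, ∏ j ∈ Finset.cons i s hi, q^(w j * f j)
      = ∑ p ∈ Finset.HasAntidiagonal.antidiagonal n, q^(w i * p.1) *
          ∑ f ∈ s.piAntidiag p.2, ∏ j ∈ s, q^(w j * f j) := by
  rw [Finset.piAntidiag_cons, Finset.sum_disjiUnion]
  refine Finset.sum_congr rfl fun p hp => ?_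
  rw [Finset.sum_map, Finset.mul_sum]
  refine Finset.sum_congr rfl fun g hg => ?_
  have hgi : g i = 0 := by
    rcases Finset.mem_piAntidiag.mp hg with ⟨-, h2⟩
    by_contra h; exact hi (h2 i h)
  rw [Finset.prod_cons]
  simp only [addRightEmbedding_apply]
  rw [Pi.add_apply, hgi, if_pos rfl, zero_add]
  congr 1
  refine Finset.prod_congr rfl fun j hj => ?_
  have : j ≠ i := fun h => hi (h ▸ hj)
  rw [Pi.add_apply, if_neg this, add_zero]

def U (q m n : ℕ) : ℕ :=
  ∑ f ∈ (Finset.range m).piAntidiag n, ∏ j ∈ Finset.range m, q^((j+1) * f j)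

lemma U_succ (q m n : ℕ) :
    U q (m+1) n = ∑ p ∈ Finset.HasAntidiagonal.antidiagonal n, q^((m+1)*p.1) * U q m p.2 := by
  have h : Finset.range (m+1) = Finset.cons m (Finset.range m) Finset.notMem_range_self := by
    rw [Finset.cons_eq_insert, Finset.range_add_one]
  rw [U]
  rw [show ((Finset.range (m+1)).piAntidiag n : Finset (ℕ → ℕ))
      = (Finset.cons m (Finset.range m) Finset.notMem_range_self).piAntidiag n by rw [← h]]
  calc ∑ f ∈ (Finset.cons m (Finset.range m) Finset.notMem_range_self).piAntidiag n,
          ∏ j ∈ Finset.range (m+1), q^((j+1) * f j)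
      = ∑ f ∈ (Finset.cons m (Finset.range m) Finset.notMem_range_self).piAntidiag n,
          ∏ j ∈ Finset.cons m (Finset.range m) Finset.notMem_range_self, q^((j+1) * f j) := by
        rw [← h]
    _ = _ := by
        rw [sum_piAntidiag_cons q (fun j => j + 1)]
        rfl

lemma U_eq_T (q : ℕ) : ∀ m n, U q m n = T q m n
  | 0, 0 => by simp [U, T]
  | 0, n+1 => by
      simp [U, T, Finset.piAntidiag_empty_of_ne_zero (Nat.succ_ne_zero n)]
  | m+1, 0 => by simp [U, T]
  | m+1, n+1 => by
      rw [U_succ, Finset.Nat.antidiagonal_succ, Finset.sum_cons, Finset.sum_map]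
      have h1 : U q m (n+1) = T q m (n+1) := U_eq_T q m (n+1)
      have h2 : U q (m+1) n = T q (m+1) n := U_eq_T q (m+1) n
      rw [U_succ] at h2
      show q ^ ((m+1)*0) * U q m (n + 1) + _ = T q (m+1) (n+1)
      rw [mul_zero, pow_zero, one_mul, h1]
      show _ + ∑ p ∈ Finset.HasAntidiagonal.antidiagonal n, q^((m+1)*(p.1+1)) * U q m p.2 = _
      have : ∀ p ∈ Finset.HasAntidiagonal.antidiagonal n,
          q^((m+1)*(p.1+1)) * U q m p.2 = q^(m+1) * (q^((m+1)*p.1) * U q m p.2) := by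
        intro p _
        rw [show (m+1)*(p.1+1) = (m+1) + (m+1)*p.1 by ring, pow_add, mul_assoc]
      rw [Finset.sum_congr rfl this, ← Finset.mul_sum, h2,
        show T q (m+1) (n+1) = T q m (n+1) + q^(m+1) * T q (m+1) n from by rw [T]]
  termination_by m n => (m, n)

end Stmt10

namespace Stmt10
section Count

variable (F : Type*) [Field F] [Fintype F]

noncomputable def monicEquiv (k : ℕ) :
    {p : Polynomial F // p.Monic ∧ p.natDegree = k} ≃ Polynomial.degreeLT F k where
  toFun p := ⟨p.1 - Polynomial.X^k, by
    rw [Polynomial.mem_degreeLT]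
    have h1 : p.1.degree = ((Polynomial.X : Polynomial F)^k).degree := by
      rw [Polynomial.degree_X_pow, Polynomial.degree_eq_natDegree p.2.1.ne_zero, p.2.2]
    have h2 := Polynomial.degree_sub_lt h1 p.2.1.ne_zero
      (by rw [p.2.1.leadingCoeff, (Polynomial.monic_X_pow k).leadingCoeff])
    calc (p.1 - Polynomial.X^k).degree < p.1.degree := h2
      _ = (k : WithBot ℕ) := by
          rw [Polynomial.degree_eq_natDegree p.2.1.ne_zero, p.2.2]⟩
  invFun r := ⟨Polynomial.X^k + r.1, by
    have hr : (r.1 : Polynomial F).degree < (k : WithBot ℕ) := Polynomial.mem_degreeLT.mp r.2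
    refine ⟨Polynomial.monic_X_pow_add hr, ?_⟩
    have hd : (Polynomial.X^k + r.1 : Polynomial F).degree = (k : WithBot ℕ) := by
      rw [Polynomial.degree_add_eq_left_of_degree_lt, Polynomial.degree_X_pow]
      rw [Polynomial.degree_X_pow]; exact hr
    exact Polynomial.natDegree_eq_of_degree_eq_some hd⟩
  left_inv p := Subtype.ext (by simp)
  right_inv r := Subtype.ext (by simp)

lemma card_monic (k : ℕ) :
    Nat.card {p : Polynomial F // p.Monic ∧ p.natDegree = k} = Fintype.card F ^ k := by
  rw [Nat.card_congr (monicEquiv F k), Nat.card_congr (Polynomial.degreeLTEquiv F k).toEquiv]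
  simp [Nat.card_eq_fintype_card]

lemma card_degreeLT (k : ℕ) :
    Nat.card (Polynomial.degreeLT F k) = Fintype.card F ^ k := by
  rw [Nat.card_congr (Polynomial.degreeLTEquiv F k).toEquiv]
  simp [Nat.card_eq_fintype_card]

instance finite_degreeLT (k : ℕ) : Finite (Polynomial.degreeLT F k) :=
  Finite.of_equiv _ (Polynomial.degreeLTEquiv F k).toEquiv.symm

instance finite_monic (k : ℕ) : Finite {p : Polynomial F // p.Monic ∧ p.natDegree = k} :=
  Finite.of_equiv _ (monicEquiv F k).symm

end Count
end Stmt10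


namespace Stmt10
section Matrices

variable {F : Type*} [Field F] {m : ℕ}

lemma det_eq_prod_diag {D : Matrix (Fin m) (Fin m) (Polynomial F)} (hD : HermiteForm D) :
    D.det = ∏ i, D i i :=
  Matrix.det_of_lowerTriangular D (fun i j hij => hD.1 i j hij)

lemma natDegree_det {D : Matrix (Fin m) (Fin m) (Polynomial F)} (hD : HermiteForm D) :
    D.det.natDegree = ∑ i, (D i i).natDegree := by
  rw [det_eq_prod_diag hD]
  exact Polynomial.natDegree_prod _ _ (fun i _ => (hD.2.1 i).ne_zero)

/-- parameter space for fixed degree vector `d`. -/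
def W (F : Type*) [Field F] (m : ℕ) (d : Fin m → ℕ) : Type _ :=
  ∀ i : Fin m, {p : Polynomial F // p.Monic ∧ p.natDegree = d i} ×
    (Fin i.1 → Polynomial.degreeLT F (d i))

instance (d : Fin m → ℕ) [Fintype F] : Finite (W F m d) := by
  unfold W; infer_instance

noncomputable def buildM (d : Fin m → ℕ) (w : W F m d) : Matrix (Fin m) (Fin m) (Polynomial F) :=
  fun i j => if h : (j : ℕ) < (i : ℕ) then (((w i).2 ⟨j, h⟩ : Polynomial.degreeLT F (d i)) :
    Polynomial F) else if i = j then ((w i).1 : Polynomial F) else 0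

lemma buildM_diag (d : Fin m → ℕ) (w : W F m d) (i : Fin m) :
    buildM d w i i = ((w i).1 : Polynomial F) := by
  simp [buildM]

lemma buildM_lower (d : Fin m → ℕ) (w : W F m d) {i j : Fin m} (h : (j : ℕ) < (i : ℕ)) :
    buildM d w i j = (((w i).2 ⟨j, h⟩ : Polynomial.degreeLT F (d i)) : Polynomial F) :=
  dif_pos h

lemma hermite_buildM (d : Fin m → ℕ) (w : W F m d) : HermiteForm (buildM d w) := by
  refine ⟨fun i j hij => ?_, fun i => ?_, fun i j hji => ?_⟩
  · simp only [buildM]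
    rw [dif_neg (by omega : ¬ (j:ℕ) < (i:ℕ)), if_neg (by exact fun h => absurd h (ne_of_lt hij))]
  · rw [buildM_diag]; exact (w i).1.2.1
  · have hji' : (j : ℕ) < (i : ℕ) := hji
    rw [buildM_lower d w hji', buildM_diag]
    have h1 : (((w i).1 : Polynomial F)).degree = ((d i : ℕ) : WithBot ℕ) := by
      rw [Polynomial.degree_eq_natDegree (w i).1.2.1.ne_zero, (w i).1.2.2]
    rw [h1]
    exact Polynomial.mem_degreeLT.mp ((w i).2 ⟨j, hji'⟩).2

lemma buildM_eq_self {D : Matrix (Fin m) (Fin m) (Polynomial F)} (hD : HermiteForm D)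
    (d : Fin m → ℕ) (w : W F m d)
    (hw : ∀ i, ((w i).1 : Polynomial F) = D i i)
    (hw2 : ∀ i (j : Fin i.1), (((w i).2 j : Polynomial.degreeLT F (d i))) =
      D i ⟨j.1, j.2.trans i.isLt⟩) :
    buildM d w = D := by
  funext i j
  rcases lt_trichotomy (j : ℕ) (i : ℕ) with h | h | h
  · rw [buildM_lower _ _ h, hw2 i ⟨j, h⟩]
  · have hij : i = j := Fin.ext h.symm
    subst hij
    rw [buildM_diag, hw]
  · have h0 : D i j = 0 := hD.1 i j h
    rw [h0]
    simp only [buildM]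
    rw [dif_neg (by omega), if_neg (fun hh => absurd (congrArg Fin.val hh) h.ne)]

lemma natDegree_det_buildM (d : Fin m → ℕ) (w : W F m d) :
    (buildM d w).det.natDegree = ∑ i, d i := by
  rw [natDegree_det (hermite_buildM d w)]
  exact Finset.sum_congr rfl fun i _ => by rw [buildM_diag]; exact (w i).1.2.2

variable (F m) in
/-- fiber equivalence. -/
noncomputable def fiberEquiv (n : ℕ)
    (φ : {D : Matrix (Fin m) (Fin m) (Polynomial F) // HermiteForm D ∧ D.det.natDegree = n} →
      {d : Fin m → ℕ // ∑ i, d i = n})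
    (hφ : ∀ D, (φ D).1 = fun i => ((D.1 i i).natDegree))
    (d : {d : Fin m → ℕ // ∑ i, d i = n}) :
    {D : {D : Matrix (Fin m) (Fin m) (Polynomial F) // HermiteForm D ∧ D.det.natDegree = n} //
      φ D = d} ≃ W F m d.1 where
  toFun X := fun i =>
    (⟨X.1.1 i i, X.1.2.1.2.1 i, by
        have h := congrFun (congrArg Subtype.val X.2) i
        rw [hφ] at h; exact h⟩,
     fun j => ⟨X.1.1 i ⟨j.1, j.2.trans i.isLt⟩, by
        rw [Polynomial.mem_degreeLT]
        have h3 := X.1.2.1.2.2 i ⟨j.1, j.2.trans i.isLt⟩ j.2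
        have h := congrFun (congrArg Subtype.val X.2) i
        rw [hφ] at h
        calc (X.1.1 i ⟨j.1, j.2.trans i.isLt⟩).degree < (X.1.1 i i).degree := h3
          _ = ((d.1 i : ℕ) : WithBot ℕ) := by
              rw [Polynomial.degree_eq_natDegree (X.1.2.1.2.1 i).ne_zero]
              exact congrArg _ h⟩)
  invFun w := ⟨⟨buildM d.1 w, hermite_buildM d.1 w, by
      rw [natDegree_det_buildM]; exact d.2⟩, by
      apply Subtype.ext
      rw [hφ]
      exact funext fun i => by
        show (buildM d.1 w i i).natDegree = d.1 i
        rw [buildM_diag]; exact (w i).1.2.2⟩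
  left_inv X :=
    Subtype.ext (Subtype.ext (buildM_eq_self X.1.2.1 d.1 _
      (fun i => rfl) (fun i j => rfl)))
  right_inv w := by
    funext i
    refine Prod.ext (Subtype.ext ?_) (funext fun j => Subtype.ext ?_)
    · exact buildM_diag d.1 w i
    · show buildM d.1 w i ⟨j.1, _⟩ = _
      rw [buildM_lower d.1 w (show ((⟨j.1, j.2.trans i.isLt⟩ : Fin m) : ℕ) < (i:ℕ) from j.2)]

end Matrices
end Stmt10

namespace Stmt10
section Assemble

lemma nat_card_sigma {ι : Type*} [Fintype ι] (β : ι → Type*) [∀ i, Finite (β i)] :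
    Nat.card (Σ i, β i) = ∑ i, Nat.card (β i) := by
  letI : ∀ i, Fintype (β i) := fun i => Fintype.ofFinite _
  simp [Nat.card_eq_fintype_card]

variable (F : Type*) [Field F] [Fintype F]

lemma card_W (m : ℕ) (d : Fin m → ℕ) :
    Nat.card (W F m d) = ∏ i : Fin m, (Fintype.card F)^((i.1+1) * d i) := by
  rw [show Nat.card (W F m d) = Nat.card (∀ i : Fin m,
      {p : Polynomial F // p.Monic ∧ p.natDegree = d i} ×
      (Fin i.1 → Polynomial.degreeLT F (d i))) from rfl]
  rw [Nat.card_pi]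
  refine Finset.prod_congr rfl fun i _ => ?_
  rw [Nat.card_prod, card_monic, Nat.card_fun, card_degreeLT, Nat.card_eq_fintype_card,
    Fintype.card_fin, ← pow_mul, ← pow_add]
  congr 1
  ring

lemma adT_sum_eq_U (q m n : ℕ) :
    ∑ d ∈ Finset.Nat.antidiagonalTuple m n, ∏ i : Fin m, q^((i.1+1) * d i) = U q m n := by
  rw [U]
  refine Finset.sum_nbij' (i := fun d j => if h : j < m then d ⟨j, h⟩ else 0)
    (j := fun f i => f i.1) ?_ ?_ ?_ ?_ ?_
  · intro d hd
    rw [Finset.mem_piAntidiag]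
    refine ⟨?_, fun j hj => ?_⟩
    · rw [Finset.sum_range (fun j => if h : j < m then d ⟨j, h⟩ else 0)]
      rw [← Finset.Nat.mem_antidiagonalTuple.mp hd]
      exact Finset.sum_congr rfl fun i _ => by rw [dif_pos i.isLt]
    · by_contra hjm
      rw [Finset.mem_range] at hjm
      exact hj (dif_neg hjm)
  · intro f hf
    rw [Finset.Nat.mem_antidiagonalTuple]
    rcases Finset.mem_piAntidiag.mp hf with ⟨h1, -⟩
    rw [← h1, Finset.sum_range (fun j => f j)]
  · intro d _
    funext i
    show (if h : (i:ℕ) < m then d ⟨i.1, h⟩ else 0) = d i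
    rw [dif_pos i.isLt]
  · intro f hf
    funext j
    show (if h : j < m then f j else 0) = f j
    by_cases h : j < m
    · rw [dif_pos h]
    · rw [dif_neg h]
      rcases Finset.mem_piAntidiag.mp hf with ⟨-, h2⟩
      by_contra h0
      exact h (Finset.mem_range.mp (h2 j (fun hh => h0 hh.symm)))
  · intro d _
    rw [Finset.prod_range (fun j => q ^ ((j+1) * (if h : j < m then d ⟨j, h⟩ else 0)))]
    exact Finset.prod_congr rfl fun i _ => by rw [dif_pos i.isLt]

lemma card_hermite (m n : ℕ) :
    Nat.card {D : Matrix (Fin m) (Fin m) (Polynomial F) // HermiteForm D ∧ D.det.natDegree = n}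
      = U (Fintype.card F) m n := by
  classical
  letI : Fintype {d : Fin m → ℕ // ∑ i, d i = n} :=
    Fintype.subtype (Finset.Nat.antidiagonalTuple m n)
      (fun d => Finset.Nat.mem_antidiagonalTuple)
  set S := {D : Matrix (Fin m) (Fin m) (Polynomial F) // HermiteForm D ∧ D.det.natDegree = n}
    with hS
  set φ : S → {d : Fin m → ℕ // ∑ i, d i = n} :=
    fun D => ⟨fun i => (D.1 i i).natDegree, by rw [← natDegree_det D.2.1]; exact D.2.2⟩ with hφ
  have hφ' : ∀ D, (φ D).1 = fun i => ((D.1 i i).natDegree) := fun D => rfl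
  haveI : ∀ d, Finite {D : S // φ D = d} :=
    fun d => Finite.of_equiv _ (fiberEquiv F m n φ hφ' d).symm
  have h1 : Nat.card S = Nat.card (Σ d, {D : S // φ D = d}) :=
    (Nat.card_congr (Equiv.sigmaFiberEquiv φ)).symm
  rw [h1, nat_card_sigma]
  have h2 : ∀ d, Nat.card {D : S // φ D = d} =
      ∏ i : Fin m, (Fintype.card F)^((i.1+1) * d.1 i) := fun d => by
    rw [Nat.card_congr (fiberEquiv F m n φ hφ' d), card_W]
  rw [Finset.sum_congr rfl (fun d _ => h2 d)]
  rw [← Finset.sum_subtype (Finset.Nat.antidiagonalTuple m n)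
    (fun d => Finset.Nat.mem_antidiagonalTuple)
    (fun d => ∏ i : Fin m, (Fintype.card F)^((i.1+1) * d i))]
  exact adT_sum_eq_U (Fintype.card F) m n

end Assemble
end Stmt10


/-- The number `H_{n,m}` of `m × m` polynomial matrices over a finite field `F` with `q`
elements in Hermite form with `deg det = n` satisfies
`H_{n,m} = q ^ (m n) * ∏_{j=1}^{n} (1 - q^{-(m+j-1)}) / (1 - q^{-j})`. -/
theorem stmt10 (F : Type*) [Field F] [Fintype F] (m n : ℕ) (hm : 1 ≤ m) (hn : 1 ≤ n) :
    (Nat.card {D : Matrix (Fin m) (Fin m) (Polynomial F) //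
        HermiteForm D ∧ D.det.natDegree = n} : ℚ) =
      (Fintype.card F : ℚ) ^ (m * n) *
        ∏ j ∈ Finset.Icc 1 n,
          (1 - ((Fintype.card F : ℚ))⁻¹ ^ (m + j - 1)) /
            (1 - ((Fintype.card F : ℚ))⁻¹ ^ j) := by
  classical
  set q := Fintype.card F with hq
  set Q : ℚ := (q : ℚ) with hQ
  have hq1 : 1 < Q := by
    rw [hQ, hq]
    exact_mod_cast Fintype.one_lt_card
  have hQ0 : Q ≠ 0 := by positivity
  rw [Stmt10.card_hermite, Stmt10.U_eq_T]
  set N : ℚ := ∏ k ∈ Finset.range n, (Q^(m+k) - 1) with hN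
  set D : ℚ := ∏ k ∈ Finset.range n, (Q^(k+1) - 1) with hD
  have hfact : ∀ k : ℕ, Q^(k+1) - 1 ≠ 0 := fun k =>
    sub_ne_zero.mpr (ne_of_gt (one_lt_pow₀ hq1 (Nat.succ_ne_zero k)))
  have hDne : D ≠ 0 := Finset.prod_ne_zero_iff.mpr fun k _ => hfact k
  have key : (Stmt10.T q m n : ℚ) * D = Q^n * N := Stmt10.T_closed q m n
  have hT : (Stmt10.T q m n : ℚ) = Q^n * N / D := by
    rw [eq_div_iff hDne]; exact key
  rw [hT]
  -- rewrite the RHS product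
  set s1 : ℕ := ∑ k ∈ Finset.range n, (k+1) with hs1
  set s2 : ℕ := ∑ k ∈ Finset.range n, (m+k) with hs2
  have hR : ∏ j ∈ Finset.Icc 1 n, (1 - Q⁻¹ ^ (m + j - 1)) / (1 - Q⁻¹ ^ j)
      = (N * Q^s1) / (D * Q^s2) := by
    rw [← Finset.Ico_add_one_right_eq_Icc, Finset.prod_Ico_eq_prod_range]
    simp only [Nat.add_sub_cancel]
    have step : ∀ k ∈ Finset.range n, (1 - Q⁻¹ ^ (m + (1+k) - 1)) / (1 - Q⁻¹ ^ (1+k))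
        = ((Q^(m+k) - 1) * Q^(k+1)) / ((Q^(k+1) - 1) * Q^(m+k)) := by
      intro k _
      rw [show m + (1+k) - 1 = m + k by omega, show 1 + k = k + 1 by omega]
      rw [inv_pow, inv_pow]
      have h1 : Q^(m+k) ≠ 0 := pow_ne_zero _ hQ0
      have h2 : Q^(k+1) ≠ 0 := pow_ne_zero _ hQ0
      have e1 : 1 - (Q^(m+k))⁻¹ = (Q^(m+k) - 1) / Q^(m+k) := by
        rw [sub_div, div_self h1, one_div]
      have e2 : 1 - (Q^(k+1))⁻¹ = (Q^(k+1) - 1) / Q^(k+1) := by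
        rw [sub_div, div_self h2, one_div]
      rw [e1, e2, div_div_div_comm, div_div_eq_mul_div, div_mul_eq_mul_div, div_div]
    rw [Finset.prod_congr rfl step]
    rw [Finset.prod_div_distrib, Finset.prod_mul_distrib, Finset.prod_mul_distrib]
    rw [← hN, ← hD, Finset.prod_pow_eq_pow_sum, Finset.prod_pow_eq_pow_sum, ← hs1, ← hs2]
  rw [hR]
  have hs : m*n + s1 = n + s2 := by
    rw [hs1, hs2]
    rw [Finset.sum_add_distrib, Finset.sum_add_distrib, Finset.sum_const, Finset.card_range]
    simp [mul_comm]
    omega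
  have h3 : Q^(m*n) * ((N * Q^s1)/(D * Q^s2)) = (Q^(m*n+s1) * N) / (Q^s2 * D) := by
    rw [pow_add]; ring
  rw [h3, hs, pow_add, show Q^n * Q^s2 * N = Q^s2 * (Q^n * N) by ring,
    mul_div_mul_left _ _ (pow_ne_zero _ hQ0)]
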